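/- Let λ ≥ 1 be an integer, M = 2^λ, and let n_A, n_B ≥ 1 and 2 ≤ k ≤ n_A + n_B. The number of distinct one-dimensional subspaces of ℂ^{n_A+n_B} (with coordinates indexed by Fin n_A ⊕ Fin n_B) of the form span ℂ {x}, where x ranges over vectors all of whose entries lie in the difference constellation ΔS of the M-PSK signal set, whose restriction to the Fin n_A coordinates is nonzero, whose restriction to the Fin n_B coordinates is nonzero, and which have exactly k nonzero entries, equals (C(n_A+n_B, k) − C(n_A, k) − C(n_B, k))·((M/2)^k − M/2 + 1)·M^{k−1}, where C(a,b) = 0 when b > a. (These spans are, up to taking orthogonal complements, exactly the removable singular fade subspaces arising from difference vectors with k nonzero components.) -/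

import Mathlib

/-- The `M`-PSK signal set `{exp(I·(2k+1)·π/M) : 0 ≤ k < M}`. -/
def pskSet (M : ℕ) : Set ℂ :=
  {z | ∃ k : ℕ, k < M ∧ z = Complex.exp (Complex.I * (2 * (k : ℂ) + 1) * (Real.pi : ℂ) / (M : ℂ))}

/-- The difference constellation `ΔS = {s - s' : s, s' ∈ S}`. -/
def diffSet (M : ℕ) : Set ℂ := {z | ∃ s ∈ pskSet M, ∃ s' ∈ pskSet M, z = s - s'}



open Polynomial

noncomputable def zet (M : ℕ) : ℂ := Complex.exp (↑Real.pi * Complex.I / M)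

lemma zet_prim (M : ℕ) (hM : M ≠ 0) : IsPrimitiveRoot (zet M) (2 * M) := by
  have h := Complex.isPrimitiveRoot_exp (2 * M) (by positivity)
  have harg : (2:ℂ) * ↑Real.pi * Complex.I / ↑(2*M) = ↑Real.pi * Complex.I / ↑M := by
    push_cast
    rw [mul_assoc, mul_div_mul_left _ _ (by norm_num : (2:ℂ) ≠ 0)]
  unfold zet
  rw [← harg]
  exact h

lemma zet_pow (M : ℕ) (n : ℕ) : zet M ^ n = Complex.exp (n * (↑Real.pi * Complex.I / M)) :=
  (Complex.exp_nat_mul _ n).symm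

lemma zet_pow_M (M : ℕ) (hM : M ≠ 0) : zet M ^ M = -1 := by
  rw [zet_pow]
  have hM' : (M : ℂ) ≠ 0 := Nat.cast_ne_zero.mpr hM
  rw [show (M : ℂ) * (↑Real.pi * Complex.I / M) = ↑Real.pi * Complex.I by field_simp]
  exact Complex.exp_pi_mul_I

lemma zet_ne_zero (M : ℕ) : zet M ≠ 0 := Complex.exp_ne_zero _

/-- The polynomial representing `2 cos (π m / M)`. -/
noncomputable def Pm (M m : ℕ) : Polynomial ℚ :=
  if m = 0 then 2 else if m = M then -2 else X ^ m - X ^ (M - m)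

lemma zet_pow_eq_exp (M m : ℕ) :
    zet M ^ m = Complex.exp ((↑Real.pi * m / M) * Complex.I) := by
  rw [zet_pow]; ring_nf

lemma aeval_Pm (M m : ℕ) (hM : M ≠ 0) (hm : m ≤ M) :
    (Polynomial.aeval (zet M)) (Pm M m) =
      ((2 * Real.cos (Real.pi * m / M) : ℝ) : ℂ) := by
  have hM' : (M : ℂ) ≠ 0 := Nat.cast_ne_zero.mpr hM
  unfold Pm
  split_ifs with h1 h2
  · subst h1
    simp only [map_ofNat]
    norm_num
  · rw [h2]
    have h3 : Real.pi * M / M = Real.pi := by field_simp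
    rw [h3, Real.cos_pi]
    simp only [map_ofNat, map_neg]
    norm_num
  · have key : zet M ^ (M - m) = - Complex.exp (-((↑Real.pi * m / M) * Complex.I)) := by
      have h3 : zet M ^ (M - m) * zet M ^ m = -1 := by
        rw [← pow_add, Nat.sub_add_cancel hm, zet_pow_M M hM]
      have h4 : Complex.exp ((↑Real.pi * m / M) * Complex.I) ≠ 0 := Complex.exp_ne_zero _
      have h5 := zet_pow_eq_exp M m
      rw [h5] at h3
      rw [Complex.exp_neg, eq_div_of_mul_eq h4 h3, neg_div, one_div]
    rw [map_sub, map_pow, map_pow, aeval_X, key, zet_pow_eq_exp M m]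
    rw [sub_neg_eq_add]
    have h6 := Complex.two_cos ((Real.pi * m / M : ℝ) : ℂ)
    push_cast at h6 ⊢
    rw [neg_mul] at h6
    linear_combination -h6
lemma coeff_Pm_zero (M m : ℕ) (hm : m ≤ M) :
    (Pm M m).coeff 0 = if m = 0 then 2 else if m = M then -2 else 0 := by
  unfold Pm
  split_ifs with h1 h2
  · simp
  · simp
  · have hm1 : m ≠ 0 := h1
    have hm2 : M - m ≠ 0 := by omega
    simp [coeff_X_pow, hm1, hm2, Ne.symm hm1, Ne.symm hm2]

lemma eval_deriv_Pm (M m : ℕ) (hm : m ≤ M) :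
    Polynomial.eval 1 (Polynomial.derivative (Pm M m)) * 2
      = 2 * (2 * (m:ℚ) - M) + M * (Pm M m).coeff 0 := by
  rw [coeff_Pm_zero M m hm]
  unfold Pm
  split_ifs with h1 h2
  · subst h1; simp; ring
  · subst h2; simp; ring
  · rw [derivative_sub, derivative_X_pow, derivative_X_pow]
    have hc : ((M - m : ℕ) : ℚ) = (M:ℚ) - m := by
      have : (m:ℚ) ≤ M := by exact_mod_cast hm
      push_cast [Nat.cast_sub hm]; ring
    simp [hc]
    ring

lemma cos2 {lam M : ℕ} (hlam : 1 ≤ lam) (hM : M = 2 ^ lam) {a b c d : ℕ}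
    (ha : a ≤ M) (hb : b ≤ M) (hc : c ≤ M) (hd : d ≤ M)
    (h : Real.cos (Real.pi * a / M) + Real.cos (Real.pi * b / M)
       = Real.cos (Real.pi * c / M) + Real.cos (Real.pi * d / M)) : a + b = c + d := by
  have hM0 : M ≠ 0 := by rw [hM]; positivity
  set p := Pm M a + Pm M b - Pm M c - Pm M d with hp_def
  have hz : (Polynomial.aeval (zet M)) p = 0 := by
    have hr : (2 * Real.cos (Real.pi * a / M)) + (2 * Real.cos (Real.pi * b / M))
        - (2 * Real.cos (Real.pi * c / M)) - (2 * Real.cos (Real.pi * d / M)) = 0 := by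
      linarith
    rw [hp_def, map_sub, map_sub, map_add, aeval_Pm M a hM0 ha, aeval_Pm M b hM0 hb,
      aeval_Pm M c hM0 hc, aeval_Pm M d hM0 hd]
    exact_mod_cast congrArg (Complex.ofReal) hr
  have hpz : p = 0 := by
    by_contra hp
    have hdvd := minpoly.dvd ℚ (zet M) hz
    have hmin : minpoly ℚ (zet M) = Polynomial.cyclotomic (2*M) ℚ :=
      (Polynomial.cyclotomic_eq_minpoly_rat (zet_prim M hM0) (by omega)).symm
    have hdeg : (minpoly ℚ (zet M)).natDegree = M := by
      rw [hmin, Polynomial.natDegree_cyclotomic]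
      rw [hM, show 2 * 2 ^ lam = 2 ^ (lam + 1) from (pow_succ' 2 lam).symm]
      rw [Nat.totient_prime_pow Nat.prime_two (by omega)]
      simp
    have hle := Polynomial.natDegree_le_of_dvd hdvd hp
    have hPdeg : ∀ m, m ≤ M → (Pm M m).natDegree ≤ M - 1 := by
      intro m hm
      unfold Pm
      split_ifs with h1 h2
      · simp
      · simp [Polynomial.natDegree_neg]
      · refine le_trans (Polynomial.natDegree_sub_le _ _) ?_
        rw [Polynomial.natDegree_X_pow, Polynomial.natDegree_X_pow]
        omega
    have hpd : p.natDegree ≤ M - 1 := by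
      refine le_trans (Polynomial.natDegree_sub_le _ _) (max_le ?_ (hPdeg d hd))
      refine le_trans (Polynomial.natDegree_sub_le _ _) (max_le ?_ (hPdeg c hc))
      exact le_trans (Polynomial.natDegree_add_le _ _)
        (max_le (hPdeg a ha) (hPdeg b hb))
    rw [hdeg] at hle
    omega
  have hB : (Pm M a).coeff 0 + (Pm M b).coeff 0 - (Pm M c).coeff 0 - (Pm M d).coeff 0 = 0 := by
    have := congrArg (fun q => Polynomial.coeff q 0) hpz
    simpa [hp_def, Polynomial.coeff_sub, Polynomial.coeff_add] using this
  have hA : Polynomial.eval 1 (Polynomial.derivative (Pm M a))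
      + Polynomial.eval 1 (Polynomial.derivative (Pm M b))
      - Polynomial.eval 1 (Polynomial.derivative (Pm M c))
      - Polynomial.eval 1 (Polynomial.derivative (Pm M d)) = 0 := by
    have := congrArg (fun q => Polynomial.eval 1 (Polynomial.derivative q)) hpz
    simpa [hp_def, Polynomial.derivative_sub, Polynomial.derivative_add,
      Polynomial.eval_sub, Polynomial.eval_add] using this
  have ida := eval_deriv_Pm M a ha
  have idb := eval_deriv_Pm M b hb
  have idc := eval_deriv_Pm M c hc
  have idd := eval_deriv_Pm M d hd
  have key : (a:ℚ) + b = c + d := by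
    linear_combination (-ida - idb + idc + idd + 2*hA - (M:ℚ)*hB)/4
  exact_mod_cast key
/-- Squared chord length function. -/
noncomputable def FF (M d : ℕ) : ℝ := 2 - 2 * Real.cos (Real.pi * ((2 * d : ℕ) : ℝ) / M)

section PairSection
variable {lam M : ℕ} (hlam : 1 ≤ lam) (hM : M = 2 ^ lam)

include hlam hM

lemma Mdvd : M / 2 * 2 = M ∧ 1 ≤ M / 2 := by
  have h2 : 2 ∣ M := hM ▸ dvd_pow_self 2 (by omega)
  have hMpos : 0 < M := by rw [hM]; positivity
  have : M ≠ 1 := by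
    rw [hM]; intro hcon
    have := Nat.one_lt_two_pow (n := lam) (by omega)
    omega
  omega

lemma cos_inj {p q : ℕ} (hp : p ≤ M) (hq : q ≤ M)
    (h : Real.cos (Real.pi * p / M) = Real.cos (Real.pi * q / M)) : p = q := by
  have := cos2 hlam hM hp hp hq hq (by rw [h])
  omega

lemma FF_inj {p q : ℕ} (hp : p ≤ M / 2) (hq : q ≤ M / 2) (h : FF M p = FF M q) : p = q := by
  obtain ⟨he, h1⟩ := Mdvd hlam hM
  unfold FF at h
  have hc : Real.cos (Real.pi * ((2*p : ℕ) : ℝ) / M) = Real.cos (Real.pi * ((2*q : ℕ) : ℝ) / M) := by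
    linarith
  have := cos_inj hlam hM (p := 2*p) (q := 2*q) (by omega) (by omega) (by exact_mod_cast hc)
  omega

lemma FF_pos {d : ℕ} (hd1 : 1 ≤ d) (hd2 : d ≤ M / 2) : 0 < FF M d := by
  obtain ⟨he, h1⟩ := Mdvd hlam hM
  have hle : Real.cos (Real.pi * ((2*d : ℕ) : ℝ) / M) ≤ 1 := Real.cos_le_one _
  have hne : Real.cos (Real.pi * ((2*d : ℕ) : ℝ) / M) ≠ 1 := by
    intro hcon
    have h0 : Real.cos (Real.pi * (0:ℕ) / M) = 1 := by norm_num
    have := cos_inj hlam hM (p := 2*d) (q := 0) (by omega) (by omega) (by rw [h0, hcon])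
    omega
  unfold FF
  have := lt_of_le_of_ne hle hne
  linarith

omit hlam hM in
lemma FF_sin (d : ℕ) : FF M d = 4 * Real.sin (Real.pi * d / M) ^ 2 := by
  have harg : Real.pi * (2*d : ℕ) / M = 2 * (Real.pi * d / M) := by push_cast; ring
  unfold FF
  rw [harg, Real.cos_two_mul]
  have := Real.sin_sq_add_cos_sq (Real.pi * d / M)
  nlinarith [this]

omit hlam hM in
lemma two_sin_sin {p q : ℕ} (hpq : p ≤ q) :
    2 * Real.sin (Real.pi * p / M) * Real.sin (Real.pi * q / M)
      = Real.cos (Real.pi * (q - p : ℕ) / M) - Real.cos (Real.pi * (p + q : ℕ) / M) := by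
  rw [Nat.cast_sub hpq]
  push_cast
  rw [show Real.pi * ((q:ℝ) - p) / M = Real.pi * q / M - Real.pi * p / M by ring,
      show Real.pi * ((p:ℝ) + q) / M = Real.pi * q / M + Real.pi * p / M by ring,
      Real.cos_sub, Real.cos_add]
  ring

omit hlam in
lemma sin_nonneg_M {p : ℕ} (hp : p ≤ M) : 0 ≤ Real.sin (Real.pi * p / M) := by
  have hMpos : 0 < M := by rw [hM]; positivity
  apply Real.sin_nonneg_of_nonneg_of_le_pi
  · positivity
  · rw [div_le_iff₀ (by positivity)]
    have : (p:ℝ) ≤ M := by exact_mod_cast hp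
    nlinarith [Real.pi_pos]

lemma pair_eq {p q r w : ℕ} (hp1 : 1 ≤ p) (hp2 : p ≤ M/2) (hq1 : 1 ≤ q) (hq2 : q ≤ M/2)
    (hr1 : 1 ≤ r) (hr2 : r ≤ M/2) (hw1 : 1 ≤ w) (hw2 : w ≤ M/2)
    (h : FF M p * FF M q = FF M r * FF M w) :
    (p = r ∧ q = w) ∨ (p = w ∧ q = r) := by
  obtain ⟨he, h1⟩ := Mdvd hlam hM
  have hsin : Real.sin (Real.pi * p / M) * Real.sin (Real.pi * q / M)
      = Real.sin (Real.pi * r / M) * Real.sin (Real.pi * w / M) := by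
    have e1 := FF_sin (M := M) p
    have e2 := FF_sin (M := M) q
    have e3 := FF_sin (M := M) r
    have e4 := FF_sin (M := M) w
    have hsq : (Real.sin (Real.pi * p / M) * Real.sin (Real.pi * q / M))^2
        = (Real.sin (Real.pi * r / M) * Real.sin (Real.pi * w / M))^2 := by
      rw [e1, e2, e3, e4] at h
      nlinarith [h]
    have n1 := mul_nonneg (sin_nonneg_M hM (p := p) (by omega))
      (sin_nonneg_M hM (p := q) (by omega))
    have n2 := mul_nonneg (sin_nonneg_M hM (p := r) (by omega))
      (sin_nonneg_M hM (p := w) (by omega))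
    nlinarith [hsq, n1, n2]
  have hcancel : ∀ a b : ℕ, 1 ≤ a → a ≤ M/2 → 1 ≤ b → b ≤ M/2 →
      FF M p * FF M q = FF M r * FF M w →
      True := fun _ _ _ _ _ _ _ => trivial
  rcases le_total p q with hpq | hqp <;> rcases le_total r w with hrw | hwr
  · -- p ≤ q, r ≤ w
    have t1 := two_sin_sin (M := M) hpq
    have t2 := two_sin_sin (M := M) hrw
    have hco : Real.cos (Real.pi * (q - p : ℕ) / M) + Real.cos (Real.pi * (r + w : ℕ) / M)
        = Real.cos (Real.pi * (w - r : ℕ) / M) + Real.cos (Real.pi * (p + q : ℕ) / M) := by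
      linarith [t1, t2, hsin]
    have := cos2 hlam hM (a := q - p) (b := r + w) (c := w - r) (d := p + q)
      (by omega) (by omega) (by omega) (by omega) hco
    have hrp : r = p := by omega
    rw [hrp] at h
    left
    refine ⟨hrp.symm, ?_⟩
    have hFq : FF M q = FF M w :=
      mul_left_cancel₀ (ne_of_gt (FF_pos hlam hM hp1 hp2)) h
    exact FF_inj hlam hM hq2 hw2 hFq
  · -- p ≤ q, w ≤ r
    have t1 := two_sin_sin (M := M) hpq
    have t2 := two_sin_sin (M := M) hwr
    have hco : Real.cos (Real.pi * (q - p : ℕ) / M) + Real.cos (Real.pi * (r + w : ℕ) / M)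
        = Real.cos (Real.pi * (r - w : ℕ) / M) + Real.cos (Real.pi * (p + q : ℕ) / M) := by
      have : Real.sin (Real.pi * r / M) * Real.sin (Real.pi * w / M)
          = Real.sin (Real.pi * w / M) * Real.sin (Real.pi * r / M) := by ring
      rw [show (r + w : ℕ) = (w + r : ℕ) by omega]
      linarith [t1, t2, hsin]
    have := cos2 hlam hM (a := q - p) (b := r + w) (c := r - w) (d := p + q)
      (by omega) (by omega) (by omega) (by omega) hco
    have hwp : w = p := by omega
    right
    refine ⟨hwp.symm, ?_⟩
    have hcomm : FF M r * FF M w = FF M w * FF M r := by ring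
    rw [hcomm, hwp] at h
    have hFq : FF M q = FF M r :=
      mul_left_cancel₀ (ne_of_gt (FF_pos hlam hM hp1 hp2)) h
    exact FF_inj hlam hM hq2 hr2 hFq
  · -- q ≤ p, r ≤ w
    have t1 := two_sin_sin (M := M) hqp
    have t2 := two_sin_sin (M := M) hrw
    have hco : Real.cos (Real.pi * (p - q : ℕ) / M) + Real.cos (Real.pi * (r + w : ℕ) / M)
        = Real.cos (Real.pi * (w - r : ℕ) / M) + Real.cos (Real.pi * (q + p : ℕ) / M) := by
      linarith [t1, t2, hsin]
    have := cos2 hlam hM (a := p - q) (b := r + w) (c := w - r) (d := q + p)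
      (by omega) (by omega) (by omega) (by omega) hco
    have hrq : r = q := by omega
    right
    refine ⟨?_, hrq.symm⟩
    have hcomm : FF M p * FF M q = FF M q * FF M p := by ring
    rw [hcomm, hrq] at h
    have hFq : FF M p = FF M w :=
      mul_left_cancel₀ (ne_of_gt (FF_pos hlam hM hq1 hq2)) h
    exact FF_inj hlam hM hp2 hw2 hFq
  · -- q ≤ p, w ≤ r
    have t1 := two_sin_sin (M := M) hqp
    have t2 := two_sin_sin (M := M) hwr
    have hco : Real.cos (Real.pi * (p - q : ℕ) / M) + Real.cos (Real.pi * (r + w : ℕ) / M)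
        = Real.cos (Real.pi * (r - w : ℕ) / M) + Real.cos (Real.pi * (q + p : ℕ) / M) := by
      rw [show (r + w : ℕ) = (w + r : ℕ) by omega]
      linarith [t1, t2, hsin]
    have := cos2 hlam hM (a := p - q) (b := r + w) (c := r - w) (d := q + p)
      (by omega) (by omega) (by omega) (by omega) hco
    have hwq : w = q := by omega
    left
    have hcomm1 : FF M p * FF M q = FF M q * FF M p := by ring
    have hcomm2 : FF M r * FF M w = FF M w * FF M r := by ring
    rw [hcomm1, hcomm2, hwq] at h
    have hFp : FF M p = FF M r :=
      mul_left_cancel₀ (ne_of_gt (FF_pos hlam hM hq1 hq2)) h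
    exact ⟨FF_inj hlam hM hp2 hr2 hFp, hwq.symm⟩

end PairSection
noncomputable def DD (M d t : ℕ) : ℂ := (zet M ^ (2*d) - 1) * zet M ^ (2*t+1)

section ParamSection
variable {lam M : ℕ} (hlam : 1 ≤ lam) (hM : M = 2 ^ lam)

lemma psk_mem_iff {z : ℂ} (hM0 : M ≠ 0) :
    z ∈ pskSet M ↔ ∃ j, j < M ∧ z = zet M ^ (2*j+1) := by
  unfold pskSet
  constructor
  · rintro ⟨j, hj, rfl⟩
    exact ⟨j, hj, by rw [zet_pow]; congr 1; push_cast; ring⟩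
  · rintro ⟨j, hj, rfl⟩
    exact ⟨j, hj, by rw [zet_pow]; congr 1; push_cast; ring⟩

lemma zet_odd_mod (hM0 : M ≠ 0) (a : ℕ) :
    zet M ^ (2*a+1) = zet M ^ (2*(a % M)+1) := by
  conv_lhs => rw [← Nat.div_add_mod a M]
  rw [show 2*(M*(a/M) + a%M)+1 = (2*M)*(a/M) + (2*(a%M)+1) by ring]
  rw [pow_add, pow_mul, (zet_prim M hM0).pow_eq_one, one_pow, one_mul]

lemma zet_odd_congr (hM0 : M ≠ 0) {u v : ℕ} (h : u % M = v % M) :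
    zet M ^ (2*u+1) = zet M ^ (2*v+1) := by
  rw [zet_odd_mod hM0 u, zet_odd_mod hM0 v, h]

lemma DD_eq_diff (M d t : ℕ) : DD M d t = zet M ^ (2*(d+t)+1) - zet M ^ (2*t+1) := by
  unfold DD
  rw [sub_mul, one_mul, ← pow_add, show 2*d + (2*t+1) = 2*(d+t)+1 by ring]

lemma DD_mem (hM0 : M ≠ 0) (d t : ℕ) : DD M d t ∈ diffSet M := by
  refine ⟨zet M ^ (2*((d+t) % M)+1), ?_, zet M ^ (2*(t % M)+1), ?_, ?_⟩
  · exact (psk_mem_iff hM0).mpr ⟨(d+t) % M, Nat.mod_lt _ (by omega), rfl⟩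
  · exact (psk_mem_iff hM0).mpr ⟨t % M, Nat.mod_lt _ (by omega), rfl⟩
  · rw [DD_eq_diff, zet_odd_mod hM0 (d+t), zet_odd_mod hM0 t]

lemma zero_mem_diff (hM0 : M ≠ 0) : (0:ℂ) ∈ diffSet M := by
  refine ⟨zet M ^ (2*0+1), (psk_mem_iff hM0).mpr ⟨0, by omega, rfl⟩,
    zet M ^ (2*0+1), (psk_mem_iff hM0).mpr ⟨0, by omega, rfl⟩, by ring⟩

include hlam hM

lemma DD_ne_zero {d : ℕ} (hd1 : 1 ≤ d) (hd2 : d ≤ M/2) (t : ℕ) : DD M d t ≠ 0 := by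
  obtain ⟨he, h1⟩ := Mdvd hlam hM
  have hM0 : M ≠ 0 := by omega
  apply mul_ne_zero
  · rw [sub_ne_zero]
    exact (zet_prim M hM0).pow_ne_one_of_pos_of_lt (by omega) (by omega)
  · exact pow_ne_zero _ (zet_ne_zero M)

omit hlam hM in
lemma abs_zet_pow (n : ℕ) (hM0 : M ≠ 0) : ‖zet M ^ n‖ = 1 := by
  rw [norm_pow]
  convert one_pow n
  unfold zet
  rw [show ↑Real.pi * Complex.I / ↑M = ((Real.pi / M : ℝ) : ℂ) * Complex.I by push_cast; ring]
  rw [Complex.norm_exp]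
  simp

omit hlam hM in
lemma abs_DD_sq (d t : ℕ) (hM0 : M ≠ 0) :
    ‖DD M d t‖ ^ 2 = FF M d := by
  unfold DD
  rw [norm_mul, mul_pow, abs_zet_pow _ hM0, one_pow, mul_one, Complex.sq_norm]
  have harg : zet M ^ (2*d) = Complex.exp (((Real.pi * (2*d : ℕ) / M : ℝ) : ℂ) * Complex.I) := by
    rw [zet_pow_eq_exp]
    congr 1
    push_cast
    ring
  rw [harg, Complex.exp_mul_I, ← Complex.ofReal_cos, ← Complex.ofReal_sin]
  unfold FF
  rw [Complex.normSq_apply]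
  simp only [Complex.add_re, Complex.add_im, Complex.ofReal_re, Complex.ofReal_im,
    Complex.mul_re, Complex.mul_im, Complex.I_re, Complex.I_im, Complex.sub_re,
    Complex.sub_im, Complex.one_re, Complex.one_im]
  have := Real.sin_sq_add_cos_sq (Real.pi * (2*d : ℕ) / M)
  nlinarith [this]

lemma DD_inj {d d' t t' : ℕ} (hd1 : 1 ≤ d) (hd2 : d ≤ M/2) (hd1' : 1 ≤ d') (hd2' : d' ≤ M/2)
    (ht : t < M) (ht' : t' < M) (h : DD M d t = DD M d' t') : d = d' ∧ t = t' := by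
  obtain ⟨he, h1⟩ := Mdvd hlam hM
  have hM0 : M ≠ 0 := by omega
  have hdd : d = d' := by
    apply FF_inj hlam hM hd2 hd2'
    rw [← abs_DD_sq d t hM0, ← abs_DD_sq d' t' hM0, h]
  subst hdd
  refine ⟨rfl, ?_⟩
  unfold DD at h
  have hfac : zet M ^ (2*d) - 1 ≠ 0 := by
    rw [sub_ne_zero]
    exact (zet_prim M hM0).pow_ne_one_of_pos_of_lt (by omega) (by omega)
  have := mul_left_cancel₀ hfac h
  have := (zet_prim M hM0).pow_inj (by omega) (by omega) this
  omega

lemma DD_flip {d0 t0 : ℕ} (hd : M/2 + 1 ≤ d0) (hd2 : d0 ≤ M - 1) :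
    DD M (M - d0) ((t0 + d0 - M/2) % M) = DD M d0 t0 := by
  obtain ⟨he, h1⟩ := Mdvd hlam hM
  have hM0 : M ≠ 0 := by omega
  have hMM : zet M ^ M = -1 := zet_pow_M M hM0
  set d1 := M - d0 with hd1
  set x := t0 + d0 - M/2 with hx
  have hshift : ∀ j : ℕ, zet M ^ (2*(j + M/2)+1) = - zet M ^ (2*j+1) := by
    intro j
    rw [show 2*(j + M/2)+1 = (2*j+1) + (M/2*2) by ring, pow_add, he, hMM]
    ring
  have eA : zet M ^ (2*(d1 + x % M)+1) = zet M ^ (2*(t0 + M/2)+1) := by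
    apply zet_odd_congr hM0
    have hmod : (d1 + x % M) % M = (d1 + x) % M := (Nat.mod_modEq x M).add_left d1
    rw [hmod]
    congr 1
    omega
  have eB : zet M ^ (2*(x % M)+1) = zet M ^ (2*(t0 + d0 + M/2)+1) := by
    apply zet_odd_congr hM0
    have : (t0 + d0 + M/2) = x + M := by omega
    rw [this]
    simp [Nat.add_mod_right, Nat.mod_mod_of_dvd]
  rw [DD_eq_diff, DD_eq_diff, eA, eB]
  rw [show t0 + d0 + M/2 = (t0 + d0) + M/2 by ring, hshift (t0 + d0), hshift t0]
  ring

lemma diff_exists {z : ℂ} (hz : z ∈ diffSet M) (hz0 : z ≠ 0) :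
    ∃ d t, 1 ≤ d ∧ d ≤ M/2 ∧ t < M ∧ z = DD M d t := by
  obtain ⟨he, h1⟩ := Mdvd hlam hM
  have hM0 : M ≠ 0 := by omega
  obtain ⟨s, hs, s', hs', rfl⟩ := hz
  obtain ⟨a, ha, rfl⟩ := (psk_mem_iff hM0).mp hs
  obtain ⟨b, hb, rfl⟩ := (psk_mem_iff hM0).mp hs'
  have hab : a ≠ b := by
    rintro rfl
    exact hz0 (by ring)
  -- produce d0 ∈ [1, M-1] and t0 with difference = DD M d0 t0
  have main : ∃ d0, 1 ≤ d0 ∧ d0 ≤ M - 1 ∧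
      zet M ^ (2*a+1) - zet M ^ (2*b+1) = DD M d0 b := by
    rcases lt_or_gt_of_ne hab with hlt | hgt
    · -- a < b : d0 = a + M - b
      refine ⟨a + M - b, by omega, by omega, ?_⟩
      rw [DD_eq_diff]
      congr 1
      apply zet_odd_congr hM0
      rw [show a + M - b + b = a + M by omega, Nat.add_mod_right]
    · -- a > b : d0 = a - b
      refine ⟨a - b, by omega, by omega, ?_⟩
      rw [DD_eq_diff]
      congr 1
      rw [show a - b + b = a by omega]
  obtain ⟨d0, hd01, hd02, heq⟩ := main
  rcases le_or_gt d0 (M/2) with hhalf | hhalf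
  · exact ⟨d0, b % M, hd01, hhalf, Nat.mod_lt _ (by omega), by
      rw [heq]
      unfold DD
      rw [zet_odd_mod hM0 b]⟩
  · refine ⟨M - d0, (b + d0 - M/2) % M, by omega, by omega, Nat.mod_lt _ (by omega), ?_⟩
    rw [heq, ← DD_flip hlam hM (by omega) (by omega)]

end ParamSection
/-- canonical choice of an element of a finset -/
noncomputable def ch {α : Type*} [Nonempty α] (T : Finset α) : α :=
  if h : T.Nonempty then h.choose else Classical.arbitrary α

lemma ch_mem {α : Type*} [Nonempty α] {T : Finset α} (h : T.Nonempty) : ch T ∈ T := by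
  unfold ch
  rw [dif_pos h]
  exact h.choose_spec

open Classical in
/-- decoder for elements of the difference constellation -/
noncomputable def dec (M : ℕ) (z : ℂ) : ℕ × ℕ :=
  if h : ∃ p : ℕ × ℕ, 1 ≤ p.1 ∧ p.1 ≤ M/2 ∧ p.2 < M ∧ z = DD M p.1 p.2 then h.choose
  else (0,0)

section MoreParam
variable {lam M : ℕ} (hlam : 1 ≤ lam) (hM : M = 2 ^ lam)

include hlam hM

lemma dec_spec {z : ℂ} (hz : z ∈ diffSet M) (hz0 : z ≠ 0) :
    1 ≤ (dec M z).1 ∧ (dec M z).1 ≤ M/2 ∧ (dec M z).2 < M ∧ z = DD M (dec M z).1 (dec M z).2 := by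
  obtain ⟨d, t, h1, h2, h3, h4⟩ := diff_exists hlam hM hz hz0
  have hex : ∃ p : ℕ × ℕ, 1 ≤ p.1 ∧ p.1 ≤ M/2 ∧ p.2 < M ∧ z = DD M p.1 p.2 := ⟨(d,t), h1, h2, h3, h4⟩
  unfold dec
  classical
  rw [dif_pos hex]
  exact hex.choose_spec

omit hlam hM in
lemma zet_even_mod (hM0 : M ≠ 0) (a : ℕ) :
    zet M ^ (2*a) = zet M ^ (2*(a % M)) := by
  conv_lhs => rw [← Nat.div_add_mod a M]
  rw [show 2*(M*(a/M) + a%M) = (2*M)*(a/M) + 2*(a%M) by ring]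
  rw [pow_add, pow_mul, (zet_prim M hM0).pow_eq_one, one_pow, one_mul]

omit hlam hM in
lemma DD_mod (hM0 : M ≠ 0) (d t : ℕ) : DD M d (t % M) = DD M d t := by
  unfold DD
  rw [← zet_odd_mod hM0 t]

omit hlam hM in
lemma zet_mul_DD (hM0 : M ≠ 0) (r f s : ℕ) :
    zet M ^ (2*r) * DD M f s = DD M f ((r + s) % M) := by
  rw [DD_mod hM0]
  unfold DD
  rw [show 2*(r+s)+1 = 2*r + (2*s+1) by ring, pow_add]
  ring

omit hlam hM in
lemma abs_scalar_DD {c : ℂ} {d t e s : ℕ} (hM0 : M ≠ 0)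
    (h : c * DD M d t = DD M e s) :
    ‖c‖ ^ 2 * FF M d = FF M e := by
  have h2 := congrArg (fun z => ‖z‖ ^ 2) h
  simp only [norm_mul, mul_pow] at h2
  rw [abs_DD_sq d t hM0, abs_DD_sq e s hM0] at h2
  exact h2

lemma cross_types {c : ℂ} {d t d' t' e s e' s' : ℕ}
    (hd : 1 ≤ d) (hd2 : d ≤ M/2) (hd' : 1 ≤ d') (hd2' : d' ≤ M/2)
    (he : 1 ≤ e) (he2 : e ≤ M/2) (he' : 1 ≤ e') (he2' : e' ≤ M/2)
    (hde : d ≠ e)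
    (h1 : c * DD M d t = DD M d' t') (h2 : c * DD M e s = DD M e' s') :
    d' = d ∧ e' = e := by
  have hM0 : M ≠ 0 := by rw [hM]; positivity
  have hcross : DD M d' t' * DD M e s = DD M e' s' * DD M d t := by
    rw [← h1, ← h2]; ring
  have habs := congrArg (fun z => ‖z‖ ^ 2) hcross
  simp only [norm_mul, mul_pow] at habs
  rw [abs_DD_sq d' t' hM0, abs_DD_sq e s hM0, abs_DD_sq e' s' hM0, abs_DD_sq d t hM0] at habs
  rcases pair_eq hlam hM hd' hd2' he he2 he' he2' hd hd2 habs with ⟨hA, hB⟩ | ⟨hA, hB⟩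
  · exact absurd hB.symm hde
  · exact ⟨hA, hB.symm⟩

end MoreParam
open Finset in
/-- phase data finset -/
noncomputable def Phi {ι : Type*} [Fintype ι] [DecidableEq ι] [Nonempty ι] (M : ℕ)
    (T : Finset ι) : Finset (ι → ℕ) :=
  Fintype.piFinset (fun i => if i ∈ T ∧ i ≠ ch T then Finset.range M else {0})

open Finset in
/-- type data finset -/
noncomputable def Psi {ι : Type*} [Fintype ι] [DecidableEq ι] [Nonempty ι] (M : ℕ)
    (T : Finset ι) : Finset (ι → ℕ) :=
  (Fintype.piFinset (fun i => if i ∈ T then Finset.range (M/2) else {0})).filter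
    (fun τ => (∀ i ∈ T, ∀ j ∈ T, τ i = τ j) → τ (ch T) = 0)

/-- encoding of data as a vector -/
noncomputable def encv (M : ℕ) {ι : Type*} [DecidableEq ι] (T : Finset ι) (τ φ : ι → ℕ) :
    ι → ℂ := fun i => if i ∈ T then DD M (τ i + 1) (φ i) else 0

section Generic
variable {lam M : ℕ} (hlam : 1 ≤ lam) (hM : M = 2 ^ lam)
variable {ι : Type*} [Fintype ι] [DecidableEq ι] [Nonempty ι]

lemma Phi_spec {T : Finset ι} {φ : ι → ℕ} (h : φ ∈ Phi M T) (i : ι) :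
    (i ∈ T ∧ i ≠ ch T → φ i < M) ∧ (¬(i ∈ T ∧ i ≠ ch T) → φ i = 0) := by
  have := Fintype.mem_piFinset.mp h i
  constructor
  · intro hc; rw [if_pos hc] at this; exact Finset.mem_range.mp this
  · intro hc; rw [if_neg hc] at this; exact Finset.mem_singleton.mp this

lemma Psi_spec {T : Finset ι} {τ : ι → ℕ} (h : τ ∈ Psi M T) (i : ι) :
    (i ∈ T → τ i < M/2) ∧ (i ∉ T → τ i = 0) := by
  have := Fintype.mem_piFinset.mp (Finset.mem_filter.mp h).1 i
  constructor
  · intro hc; rw [if_pos hc] at this; exact Finset.mem_range.mp this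
  · intro hc; rw [if_neg hc] at this; exact Finset.mem_singleton.mp this

lemma Psi_cond {T : Finset ι} {τ : ι → ℕ} (h : τ ∈ Psi M T) :
    (∀ i ∈ T, ∀ j ∈ T, τ i = τ j) → τ (ch T) = 0 := (Finset.mem_filter.mp h).2

lemma Phi_lt {T : Finset ι} {φ : ι → ℕ} (h : φ ∈ Phi M T) (hM0 : M ≠ 0) (i : ι) (hi : i ∈ T) :
    φ i < M := by
  by_cases hc : i = ch T
  · have := (Phi_spec h i).2 (by simp [hc]); omega
  · exact (Phi_spec h i).1 ⟨hi, hc⟩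

lemma Phi_ch {T : Finset ι} {φ : ι → ℕ} (h : φ ∈ Phi M T) : φ (ch T) = 0 :=
  (Phi_spec h (ch T)).2 (by simp)

include hlam hM

lemma encv_support {T : Finset ι} {τ φ : ι → ℕ} (hτ : τ ∈ Psi M T) (i : ι) :
    encv M T τ φ i ≠ 0 ↔ i ∈ T := by
  unfold encv
  by_cases hi : i ∈ T
  · simp only [if_pos hi]
    have h1 := (Psi_spec hτ i).1 hi
    exact ⟨fun _ => hi, fun _ => DD_ne_zero hlam hM (by omega) (by omega) _⟩
  · simp [hi]

/-- normalization: every admissible vector is a scalar multiple of an encoded one -/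
lemma normalizeVec (x : ι → ℂ) (hx : ∀ i, x i ∈ diffSet M)
    (hne : (Finset.univ.filter (fun i => x i ≠ 0)).Nonempty) :
    ∃ (τ φ : ι → ℕ) (c : ℂ), c ≠ 0 ∧ τ ∈ Psi M (Finset.univ.filter (fun i => x i ≠ 0)) ∧
      φ ∈ Phi M (Finset.univ.filter (fun i => x i ≠ 0)) ∧
      (∀ i, encv M (Finset.univ.filter (fun i => x i ≠ 0)) τ φ i = c * x i) := by
  obtain ⟨he, hh1⟩ := Mdvd hlam hM
  have hM0 : M ≠ 0 := by omega
  set T := Finset.univ.filter (fun i => x i ≠ 0) with hT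
  set i0 := ch T with hi0
  have hi0T : i0 ∈ T := ch_mem hne
  have hxne : ∀ i ∈ T, x i ≠ 0 := fun i hi => (Finset.mem_filter.mp hi).2
  have hxz : ∀ i ∉ T, x i = 0 := by
    intro i hi
    by_contra hcon
    exact hi (Finset.mem_filter.mpr ⟨Finset.mem_univ i, hcon⟩)
  have hspec : ∀ i ∈ T, 1 ≤ (dec M (x i)).1 ∧ (dec M (x i)).1 ≤ M/2 ∧ (dec M (x i)).2 < M ∧
      x i = DD M (dec M (x i)).1 (dec M (x i)).2 :=
    fun i hi => dec_spec hlam hM (hx i) (hxne i hi)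
  obtain ⟨hd01, hd02, ht0, hx0⟩ := hspec i0 hi0T
  set d0 := (dec M (x i0)).1
  set t0 := (dec M (x i0)).2
  set u := M - t0 with hu
  set φ' : ι → ℕ := fun i => if i ∈ T then (u + (dec M (x i)).2) % M else 0 with hφ'
  have hφmem : φ' ∈ Phi M T := by
    apply Fintype.mem_piFinset.mpr
    intro i
    by_cases hc : i ∈ T ∧ i ≠ ch T
    · rw [if_pos hc, hφ']
      simp only [if_pos hc.1]
      exact Finset.mem_range.mpr (Nat.mod_lt _ (by omega))
    · rw [if_neg hc]
      rw [Finset.mem_singleton, hφ']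
      push_neg at hc
      by_cases hiT : i ∈ T
      · have hieq : i = ch T := hc hiT
        simp only [if_pos hiT]
        obtain ⟨_, _, hti, _⟩ := hspec i hiT
        have : (dec M (x i)).2 = t0 := by rw [hieq]
        rw [this, show u + t0 = M by omega, Nat.mod_self]
      · simp [hiT]
  have hφi0 : φ' i0 = 0 := by
    rw [hφ']
    simp only [if_pos hi0T]
    rw [show (dec M (x i0)).2 = t0 from rfl, show u + t0 = M by omega, Nat.mod_self]
  by_cases hconst : ∀ i ∈ T, (dec M (x i)).1 = d0
  · -- constant type case
    set R := (zet M ^ 2 - 1) / (zet M ^ (2*d0) - 1) with hR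
    have hden : zet M ^ (2*d0) - 1 ≠ 0 := by
      rw [sub_ne_zero]
      exact (zet_prim M hM0).pow_ne_one_of_pos_of_lt (by omega) (by omega)
    have hnum : zet M ^ 2 - 1 ≠ 0 := by
      rw [sub_ne_zero]
      exact (zet_prim M hM0).pow_ne_one_of_pos_of_lt (by omega) (by omega)
    refine ⟨fun _ => 0, φ', R * zet M ^ (2*u), ?_, ?_, hφmem, ?_⟩
    · exact mul_ne_zero (div_ne_zero hnum hden) (pow_ne_zero _ (zet_ne_zero M))
    · apply Finset.mem_filter.mpr
      refine ⟨Fintype.mem_piFinset.mpr fun i => ?_, fun _ => rfl⟩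
      by_cases hc : i ∈ T
      · rw [if_pos hc]; exact Finset.mem_range.mpr (by omega)
      · rw [if_neg hc]; exact Finset.mem_singleton.mpr rfl
    · intro i
      by_cases hc : i ∈ T
      · unfold encv
        rw [if_pos hc, hφ']
        simp only [if_pos hc]
        obtain ⟨hdi1, hdi2, hti, hxi⟩ := hspec i hc
        have hstep : R * zet M ^ (2*u) * DD M d0 (dec M (x i)).2
            = zet M ^ (2*u) * DD M 1 (dec M (x i)).2 := by
          rw [hR]
          unfold DD
          field_simp
        have hrhs : R * zet M ^ (2*u) * x i = DD M 1 ((u + (dec M (x i)).2) % M) := by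
          conv_lhs => rw [hxi, hconst i hc]
          rw [hstep, zet_mul_DD hM0]
        rw [hrhs]
      · unfold encv
        rw [if_neg hc, hxz i hc]
        ring
  · -- non-constant type case
    push_neg at hconst
    refine ⟨fun i => if i ∈ T then (dec M (x i)).1 - 1 else 0, φ', zet M ^ (2*u),
      pow_ne_zero _ (zet_ne_zero M), ?_, hφmem, ?_⟩
    · apply Finset.mem_filter.mpr
      constructor
      · apply Fintype.mem_piFinset.mpr
        intro i
        by_cases hc : i ∈ T
        · rw [if_pos hc]
          simp only [if_pos hc]
          obtain ⟨h1, h2, _, _⟩ := hspec i hc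
          exact Finset.mem_range.mpr (by omega)
        · rw [if_neg hc]
          simp [hc]
      · intro hcc
        obtain ⟨i1, hi1, hne1⟩ := hconst
        have := hcc i1 hi1 i0 hi0T
        simp only [if_pos hi1, if_pos hi0T] at this
        obtain ⟨ha, _, _, _⟩ := hspec i1 hi1
        omega
    · intro i
      by_cases hc : i ∈ T
      · unfold encv
        simp only [if_pos hc, hφ']
        obtain ⟨hdi1, hdi2, hti, hxi⟩ := hspec i hc
        have hrhs : zet M ^ (2*u) * x i = DD M (dec M (x i)).1 ((u + (dec M (x i)).2) % M) := by
          conv_lhs => rw [hxi]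
          rw [zet_mul_DD hM0]
        rw [show (dec M (x i)).1 - 1 + 1 = (dec M (x i)).1 by omega, ← hrhs]
      · unfold encv
        rw [if_neg hc, hxz i hc]
        ring

/-- injectivity of the encoding up to nonzero scalars -/
lemma encInj {T1 T2 : Finset ι} {τ1 φ1 τ2 φ2 : ι → ℕ} (hne1 : T1.Nonempty)
    (hτ1 : τ1 ∈ Psi M T1) (hφ1 : φ1 ∈ Phi M T1)
    (hτ2 : τ2 ∈ Psi M T2) (hφ2 : φ2 ∈ Phi M T2)
    {c : ℂ} (hc : c ≠ 0) (h : ∀ i, encv M T2 τ2 φ2 i = c * encv M T1 τ1 φ1 i) :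
    T1 = T2 ∧ τ1 = τ2 ∧ φ1 = φ2 := by
  obtain ⟨he, hh1⟩ := Mdvd hlam hM
  have hM0 : M ≠ 0 := by omega
  have hTT : T1 = T2 := by
    ext i
    rw [← encv_support hlam hM hτ1 (φ := φ1) (i := i), ← encv_support hlam hM hτ2 (φ := φ2) (i := i)]
    rw [h i]
    simp [hc, mul_ne_zero_iff]
  subst hTT
  set T := T1
  set i0 := ch T with hi0
  have hi0T : i0 ∈ T := ch_mem hne1
  have heq : ∀ i ∈ T, c * DD M (τ1 i + 1) (φ1 i) = DD M (τ2 i + 1) (φ2 i) := by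
    intro i hi
    have := h i
    unfold encv at this
    rw [if_pos hi, if_pos hi] at this
    exact this.symm
  have hr1 : ∀ i ∈ T, τ1 i < M/2 := fun i hi => (Psi_spec hτ1 i).1 hi
  have hr2 : ∀ i ∈ T, τ2 i < M/2 := fun i hi => (Psi_spec hτ2 i).1 hi
  -- first: c = 1
  have hc1 : c = 1 := by
    have habs : ∀ i ∈ T, ‖c‖ ^ 2 * FF M (τ1 i + 1) = FF M (τ2 i + 1) :=
      fun i hi => abs_scalar_DD hM0 (heq i hi)
    have hτeq : τ1 i0 = τ2 i0 := by
      by_cases hconst : ∀ i ∈ T, ∀ j ∈ T, τ1 i = τ1 j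
      · -- constant case
        have h10 : τ1 i0 = 0 := Psi_cond hτ1 hconst
        have hconst2 : ∀ i ∈ T, ∀ j ∈ T, τ2 i = τ2 j := by
          intro i hi j hj
          have e1 := habs i hi
          have e2 := habs j hj
          rw [hconst i hi j hj] at e1
          have : FF M (τ2 i + 1) = FF M (τ2 j + 1) := by rw [← e1, ← e2]
          have := FF_inj hlam hM (by have := hr2 i hi; omega) (by have := hr2 j hj; omega) this
          omega
        have h20 : τ2 i0 = 0 := Psi_cond hτ2 hconst2
        rw [h10, h20]
      · -- non-constant case
        push_neg at hconst
        obtain ⟨i1, hi1, j1, hj1, hnej⟩ := hconst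
        have hcross := cross_types hlam hM (d := τ1 i1 + 1) (e := τ1 j1 + 1)
          (d' := τ2 i1 + 1) (e' := τ2 j1 + 1)
          (by omega) (by have := hr1 i1 hi1; omega) (by omega) (by have := hr2 i1 hi1; omega)
          (by omega) (by have := hr1 j1 hj1; omega) (by omega) (by have := hr2 j1 hj1; omega)
          (by omega) (heq i1 hi1) (heq j1 hj1)
        have habs1 := habs i1 hi1
        rw [hcross.1] at habs1
        have hFpos := FF_pos hlam hM (d := τ1 i1 + 1) (by omega) (by have := hr1 i1 hi1; omega)
        have hcsq : ‖c‖ ^ 2 = 1 := by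
          have := mul_right_cancel₀ (ne_of_gt hFpos) (habs1.trans (one_mul _).symm)
          exact this
        have habs0 := habs i0 hi0T
        rw [hcsq, one_mul] at habs0
        have := FF_inj hlam hM (p := τ1 i0 + 1) (q := τ2 i0 + 1)
          (by have := hr1 i0 hi0T; omega) (by have := hr2 i0 hi0T; omega) habs0
        omega
    -- at i0 both phases are 0
    have hp1 : φ1 i0 = 0 := Phi_ch hφ1
    have hp2 : φ2 i0 = 0 := Phi_ch hφ2
    have he0 := heq i0 hi0T
    rw [hp1, hp2, hτeq] at he0
    have hDD0 : DD M (τ2 i0 + 1) 0 ≠ 0 :=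
      DD_ne_zero hlam hM (by omega) (by have := hr2 i0 hi0T; omega) 0
    have : c * DD M (τ2 i0 + 1) 0 = 1 * DD M (τ2 i0 + 1) 0 := by rw [he0, one_mul]
    exact mul_right_cancel₀ hDD0 this
  subst hc1
  -- now entries are equal
  have hent : ∀ i ∈ T, τ1 i = τ2 i ∧ φ1 i = φ2 i := by
    intro i hi
    have := heq i hi
    rw [one_mul] at this
    have hφ1i := Phi_lt hφ1 hM0 i hi
    have hφ2i := Phi_lt hφ2 hM0 i hi
    have := DD_inj hlam hM (by omega) (by have := hr1 i hi; omega)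
      (by omega) (by have := hr2 i hi; omega) hφ1i hφ2i this
    omega
  refine ⟨rfl, funext fun i => ?_, funext fun i => ?_⟩
  · by_cases hi : i ∈ T
    · exact (hent i hi).1
    · rw [(Psi_spec hτ1 i).2 hi, (Psi_spec hτ2 i).2 hi]
  · by_cases hi : i ∈ T
    · exact (hent i hi).2
    · rw [(Phi_spec hφ1 i).2 (by tauto), (Phi_spec hφ2 i).2 (by tauto)]

end Generic
section Counting
variable {lam M : ℕ} (hlam : 1 ≤ lam) (hM : M = 2 ^ lam)
variable {ι : Type*} [Fintype ι] [DecidableEq ι] [Nonempty ι]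

lemma card_Phi {T : Finset ι} (hne : T.Nonempty) : (Phi M T).card = M ^ (T.card - 1) := by
  unfold Phi
  rw [Fintype.card_piFinset]
  have hcards : ∀ i : ι, (if i ∈ T ∧ i ≠ ch T then Finset.range M else ({0} : Finset ℕ)).card
      = if i ∈ T ∧ i ≠ ch T then M else 1 := by
    intro i; split_ifs <;> simp
  rw [Finset.prod_congr rfl (fun i _ => hcards i), Finset.prod_ite, Finset.prod_const,
    Finset.prod_const, one_pow, mul_one]
  congr 1
  have : Finset.univ.filter (fun i => i ∈ T ∧ i ≠ ch T) = T.erase (ch T) := by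
    ext i; simp [Finset.mem_erase, and_comm]
  rw [this, Finset.card_erase_of_mem (ch_mem hne)]

include hlam hM in
lemma card_Psi {T : Finset ι} (hne : T.Nonempty) :
    (Psi M T).card = (M/2) ^ T.card - (M/2 - 1) := by
  obtain ⟨he, hh1⟩ := Mdvd hlam hM
  classical
  set A := Fintype.piFinset (fun i => if i ∈ T then Finset.range (M/2) else ({0} : Finset ℕ))
    with hA
  have cardA : A.card = (M/2) ^ T.card := by
    rw [hA, Fintype.card_piFinset]
    have hcards : ∀ i : ι, (if i ∈ T then Finset.range (M/2) else ({0} : Finset ℕ)).card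
        = if i ∈ T then M/2 else 1 := by
      intro i; split_ifs <;> simp
    rw [Finset.prod_congr rfl (fun i _ => hcards i), Finset.prod_ite, Finset.prod_const,
      Finset.prod_const, one_pow, mul_one]
    congr 1
    have : Finset.univ.filter (fun i => i ∈ T) = T := by ext i; simp
    rw [this]
  have hsplit := Finset.card_filter_add_card_filter_not
    (s := A) (p := fun τ => (∀ i ∈ T, ∀ j ∈ T, τ i = τ j) → τ (ch T) = 0)
  have hbad : (Finset.filter (fun a => ¬((∀ i ∈ T, ∀ j ∈ T, a i = a j) → a (ch T) = 0)) A).card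
      = M/2 - 1 := by
    have htarget : ((Finset.range (M/2)).erase 0).card = M/2 - 1 := by
      rw [Finset.card_erase_of_mem
        (show (0:ℕ) ∈ Finset.range (M/2) from Finset.mem_range.mpr hh1),
        Finset.card_range]
    rw [← htarget]
    refine Finset.card_bij' (fun τ _ => τ (ch T)) (fun v _ i => if i ∈ T then v else 0)
      ?_ ?_ ?_ ?_
    · intro τ hτ
      rw [Finset.mem_filter] at hτ
      obtain ⟨hτA, hcond⟩ := hτ
      push_neg at hcond
      refine Finset.mem_erase.mpr ⟨hcond.2, ?_⟩
      have hmem := Fintype.mem_piFinset.mp hτA (ch T)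
      rwa [if_pos (ch_mem hne)] at hmem
    · intro v hv
      rw [Finset.mem_erase, Finset.mem_range] at hv
      rw [Finset.mem_filter]
      constructor
      · apply Fintype.mem_piFinset.mpr
        intro i
        by_cases hi : i ∈ T
        · simp only [if_pos hi]; exact Finset.mem_range.mpr hv.2
        · simp only [if_neg hi]; exact Finset.mem_singleton.mpr rfl
      · intro hcond
        have := hcond (by intro i hi j hj; simp only [if_pos hi, if_pos hj])
        simp only [if_pos (ch_mem hne)] at this
        exact hv.1 this
    · intro τ hτ
      rw [Finset.mem_filter] at hτ
      obtain ⟨hτA, hcond⟩ := hτ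
      push_neg at hcond
      funext i
      by_cases hi : i ∈ T
      · simp only [if_pos hi]
        exact hcond.1 (ch T) (ch_mem hne) i hi
      · simp only [if_neg hi]
        have hmem := Fintype.mem_piFinset.mp hτA i
        rw [if_neg hi] at hmem
        exact (Finset.mem_singleton.mp hmem).symm
    · intro v hv
      simp only [if_pos (ch_mem hne)]
  have hfinal := Nat.eq_sub_of_add_eq hsplit
  rw [hbad, cardA] at hfinal
  unfold Psi
  rw [← hA]
  exact hfinal

end Counting

theorem card_removable_spans (lam : ℕ) (hlam : 1 ≤ lam) (M : ℕ) (hM : M = 2 ^ lam)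
    (nA nB k : ℕ) (hnA : 1 ≤ nA) (hnB : 1 ≤ nB) (hk : 2 ≤ k) (hk' : k ≤ nA + nB) :
    {W : Submodule ℂ (Fin nA ⊕ Fin nB → ℂ) |
        ∃ x : Fin nA ⊕ Fin nB → ℂ, (∀ i, x i ∈ diffSet M) ∧
          (x ∘ Sum.inl) ≠ 0 ∧ (x ∘ Sum.inr) ≠ 0 ∧
          {i | x i ≠ 0}.ncard = k ∧ W = Submodule.span ℂ {x}}.ncard =
      ((nA + nB).choose k - nA.choose k - nB.choose k) *
        ((M / 2) ^ k - M / 2 + 1) * M ^ (k - 1) := by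
  classical
  obtain ⟨he, hh1⟩ := Mdvd hlam hM
  have hM0 : M ≠ 0 := by omega
  haveI : Nonempty (Fin nA ⊕ Fin nB) := ⟨Sum.inl ⟨0, hnA⟩⟩
  have hk0 : 0 < k := by omega
  -- arithmetic facts prepared early (with clean context)
  have harith1 : (M/2) ^ k - (M/2 - 1) = (M/2) ^ k - M/2 + 1 := by
    have := Nat.le_self_pow (n := k) (by omega) (M/2)
    omega
  have hchoose_arith : ∀ a b c : ℕ, a + (b + c) = ((nA + nB).choose k) →
      a = (nA + nB).choose k - nA.choose k - nB.choose k →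
      True := fun _ _ _ _ _ => trivial
  -- the big finsets
  set bigT : Finset (Finset (Fin nA ⊕ Fin nB)) :=
    (Finset.powersetCard k Finset.univ).filter
      (fun T => (∃ a, Sum.inl a ∈ T) ∧ (∃ b, Sum.inr b ∈ T)) with hbigT
  set Ω : Finset (Finset (Fin nA ⊕ Fin nB) × (Fin nA ⊕ Fin nB → ℕ) × (Fin nA ⊕ Fin nB → ℕ)) :=
    bigT.biUnion (fun T => ((Psi M T) ×ˢ (Phi M T)).image (fun p => (T, p.1, p.2))) with hΩ
  have hbigTmem : ∀ T ∈ bigT, T.card = k ∧ (∃ a, Sum.inl a ∈ T) ∧ (∃ b, Sum.inr b ∈ T) := by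
    intro T hT
    rw [hbigT, Finset.mem_filter] at hT
    exact ⟨Finset.mem_powersetCard_univ.mp hT.1, hT.2.1, hT.2.2⟩
  have hΩmem : ∀ ω : Finset (Fin nA ⊕ Fin nB) × (Fin nA ⊕ Fin nB → ℕ) × (Fin nA ⊕ Fin nB → ℕ),
      ω ∈ Ω → ω.1 ∈ bigT ∧ ω.2.1 ∈ Psi M ω.1 ∧ ω.2.2 ∈ Phi M ω.1 := by
    intro ω hω
    rw [hΩ, Finset.mem_biUnion] at hω
    obtain ⟨T, hT, hmem⟩ := hω
    rw [Finset.mem_image] at hmem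
    obtain ⟨p, hp, rfl⟩ := hmem
    rw [Finset.mem_product] at hp
    exact ⟨hT, hp.1, hp.2⟩
  -- validity of encoded vectors
  have hvalid : ∀ ω : Finset (Fin nA ⊕ Fin nB) × (Fin nA ⊕ Fin nB → ℕ) × (Fin nA ⊕ Fin nB → ℕ),
      ω ∈ Ω →
      (∀ i, encv M ω.1 ω.2.1 ω.2.2 i ∈ diffSet M) ∧
      (encv M ω.1 ω.2.1 ω.2.2 ∘ Sum.inl ≠ 0) ∧
      (encv M ω.1 ω.2.1 ω.2.2 ∘ Sum.inr ≠ 0) ∧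
      {i | encv M ω.1 ω.2.1 ω.2.2 i ≠ 0}.ncard = k := by
    intro ω hω
    obtain ⟨hT, hτ, hφ⟩ := hΩmem ω hω
    obtain ⟨hcard, ⟨a0, ha0⟩, ⟨b0, hb0⟩⟩ := hbigTmem ω.1 hT
    have hsupp := fun i => encv_support hlam hM (T := ω.1) (τ := ω.2.1) (φ := ω.2.2) hτ i
    refine ⟨?_, ?_, ?_, ?_⟩
    · intro i
      unfold encv
      by_cases hi : i ∈ ω.1
      · rw [if_pos hi]; exact DD_mem hM0 _ _
      · rw [if_neg hi]; exact zero_mem_diff hM0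
    · intro h0
      have := congrFun h0 a0
      simp only [Function.comp_apply, Pi.zero_apply] at this
      exact ((hsupp (Sum.inl a0)).mpr ha0) this
    · intro h0
      have := congrFun h0 b0
      simp only [Function.comp_apply, Pi.zero_apply] at this
      exact ((hsupp (Sum.inr b0)).mpr hb0) this
    · have hset : {i | encv M ω.1 ω.2.1 ω.2.2 i ≠ 0} = ↑ω.1 := by
        ext i
        simp only [Set.mem_setOf_eq, Finset.mem_coe]
        exact hsupp i
      rw [hset, Set.ncard_coe_finset, hcard]
  -- the span set is the image of Ω
  have hSeq : {W : Submodule ℂ (Fin nA ⊕ Fin nB → ℂ) |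
        ∃ x : Fin nA ⊕ Fin nB → ℂ, (∀ i, x i ∈ diffSet M) ∧
          (x ∘ Sum.inl) ≠ 0 ∧ (x ∘ Sum.inr) ≠ 0 ∧
          {i | x i ≠ 0}.ncard = k ∧ W = Submodule.span ℂ {x}} =
      (fun ω : Finset (Fin nA ⊕ Fin nB) × (Fin nA ⊕ Fin nB → ℕ) × (Fin nA ⊕ Fin nB → ℕ) => Submodule.span ℂ {encv M ω.1 ω.2.1 ω.2.2}) '' ↑Ω := by
    ext W
    simp only [Set.mem_setOf_eq, Set.mem_image, Finset.mem_coe]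
    constructor
    · rintro ⟨x, hx1, hx2, hx3, hx4, rfl⟩
      have hne : (Finset.univ.filter (fun i => x i ≠ 0)).Nonempty := by
        rw [Function.ne_iff] at hx2
        obtain ⟨a, ha⟩ := hx2
        exact ⟨Sum.inl a, Finset.mem_filter.mpr ⟨Finset.mem_univ _, ha⟩⟩
      obtain ⟨τ, φ, c, hc, hτ, hφ, henc⟩ := normalizeVec hlam hM x hx1 hne
      have hset : {i | x i ≠ 0} = ↑(Finset.univ.filter (fun i => x i ≠ 0)) := by
        ext i; simp
      refine ⟨(Finset.univ.filter (fun i => x i ≠ 0), τ, φ), ?_, ?_⟩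
      · rw [hΩ, Finset.mem_biUnion]
        refine ⟨Finset.univ.filter (fun i => x i ≠ 0), ?_, ?_⟩
        · rw [hbigT, Finset.mem_filter]
          refine ⟨Finset.mem_powersetCard_univ.mpr ?_, ?_, ?_⟩
          · rw [hset, Set.ncard_coe_finset] at hx4; exact hx4
          · rw [Function.ne_iff] at hx2
            obtain ⟨a, ha⟩ := hx2
            exact ⟨a, Finset.mem_filter.mpr ⟨Finset.mem_univ _, ha⟩⟩
          · rw [Function.ne_iff] at hx3
            obtain ⟨b, hb⟩ := hx3
            exact ⟨b, Finset.mem_filter.mpr ⟨Finset.mem_univ _, hb⟩⟩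
        · rw [Finset.mem_image]
          exact ⟨(τ, φ), Finset.mem_product.mpr ⟨hτ, hφ⟩, rfl⟩
      · have hcx : encv M (Finset.univ.filter (fun i => x i ≠ 0)) τ φ = c • x :=
          funext fun i => by rw [henc i]; rfl
        show Submodule.span ℂ {encv M (Finset.univ.filter (fun i => x i ≠ 0)) τ φ}
            = Submodule.span ℂ {x}
        rw [hcx]
        apply Submodule.span_singleton_eq_span_singleton.mpr
        refine ⟨(Units.mk0 c hc)⁻¹, ?_⟩
        simp only [Units.smul_def, Units.val_inv_eq_inv_val, Units.val_mk0, smul_smul,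
          inv_mul_cancel₀ hc, one_smul]
    · rintro ⟨ω, hω, rfl⟩
      obtain ⟨hv1, hv2, hv3, hv4⟩ := hvalid ω hω
      exact ⟨encv M ω.1 ω.2.1 ω.2.2, hv1, hv2, hv3, hv4, rfl⟩
  have hinj : Set.InjOn (fun ω : Finset (Fin nA ⊕ Fin nB) × (Fin nA ⊕ Fin nB → ℕ) × (Fin nA ⊕ Fin nB → ℕ) => Submodule.span ℂ {encv M ω.1 ω.2.1 ω.2.2}) ↑Ω := by
    intro ω1 h1 ω2 h2 hsp
    obtain ⟨hT1, hτ1, hφ1⟩ := hΩmem ω1 (by exact_mod_cast h1)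
    obtain ⟨hT2, hτ2, hφ2⟩ := hΩmem ω2 (by exact_mod_cast h2)
    obtain ⟨z, hz⟩ := Submodule.span_singleton_eq_span_singleton.mp hsp
    have hc : (z : ℂ) ≠ 0 := z.ne_zero
    have h : ∀ i, encv M ω2.1 ω2.2.1 ω2.2.2 i = (z:ℂ) * encv M ω1.1 ω1.2.1 ω1.2.2 i := by
      intro i
      rw [← hz]
      simp [Units.smul_def]
    have hT1ne : ω1.1.Nonempty := by
      rw [← Finset.card_pos, (hbigTmem ω1.1 hT1).1]
      exact hk0
    obtain ⟨e1, e2, e3⟩ := encInj hlam hM hT1ne hτ1 hφ1 hτ2 hφ2 hc h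
    exact Prod.ext e1 (Prod.ext e2 e3)
  rw [hSeq, Set.ncard_image_of_injOn hinj, Set.ncard_coe_finset]
  -- counting
  have hdisj : ∀ T₁ ∈ bigT, ∀ T₂ ∈ bigT, T₁ ≠ T₂ →
      Disjoint (((Psi M T₁) ×ˢ (Phi M T₁)).image (fun p => (T₁, p.1, p.2)))
        (((Psi M T₂) ×ˢ (Phi M T₂)).image (fun p => (T₂, p.1, p.2))) := by
    intro T₁ _ T₂ _ hne
    rw [Finset.disjoint_left]
    intro ω hω1 hω2
    rw [Finset.mem_image] at hω1 hω2
    obtain ⟨p, _, rfl⟩ := hω1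
    obtain ⟨q, _, hq⟩ := hω2
    exact hne (congrArg Prod.fst hq).symm
  have hcardΩ : Ω.card = bigT.card * (((M/2)^k - (M/2 - 1)) * M^(k-1)) := by
    rw [hΩ, Finset.card_biUnion hdisj]
    have hterm : ∀ T ∈ bigT, (((Psi M T) ×ˢ (Phi M T)).image (fun p => (T, p.1, p.2))).card
        = ((M/2)^k - (M/2 - 1)) * M^(k-1) := by
      intro T hT
      have hTcard := (hbigTmem T hT).1
      have hTne : T.Nonempty := by
        rw [← Finset.card_pos, hTcard]; exact hk0
      rw [Finset.card_image_of_injective _ (fun p q hpq => by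
        simpa [Prod.ext_iff] using hpq)]
      rw [Finset.card_product, card_Psi hlam hM hTne, card_Phi hTne, hTcard]
    rw [Finset.sum_congr rfl hterm, Finset.sum_const, smul_eq_mul]
  -- the number of good supports
  have hbigTcard : bigT.card = (nA + nB).choose k - nA.choose k - nB.choose k := by
    have htot : (Finset.powersetCard k (Finset.univ : Finset (Fin nA ⊕ Fin nB))).card
        = (nA + nB).choose k := by
      rw [Finset.card_powersetCard, Finset.card_univ, Fintype.card_sum, Fintype.card_fin,
        Fintype.card_fin]
    have hsplit := Finset.card_filter_add_card_filter_not
      (s := Finset.powersetCard k (Finset.univ : Finset (Fin nA ⊕ Fin nB)))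
      (p := fun T => (∃ a, Sum.inl a ∈ T) ∧ (∃ b, Sum.inr b ∈ T))
    have hbadsplit : ((Finset.powersetCard k (Finset.univ : Finset (Fin nA ⊕ Fin nB))).filter
        (fun T => ¬((∃ a, Sum.inl a ∈ T) ∧ (∃ b, Sum.inr b ∈ T)))).card
        = nA.choose k + nB.choose k := by
      have hbadeq : (Finset.powersetCard k (Finset.univ : Finset (Fin nA ⊕ Fin nB))).filter
          (fun T => ¬((∃ a, Sum.inl a ∈ T) ∧ (∃ b, Sum.inr b ∈ T)))
          = Finset.powersetCard k (Finset.univ.image Sum.inl)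
            ∪ Finset.powersetCard k (Finset.univ.image Sum.inr) := by
        ext T
        simp only [Finset.mem_filter, Finset.mem_union, Finset.mem_powersetCard,
          Finset.subset_univ, true_and]
        constructor
        · rintro ⟨hcard, hbad⟩
          rw [not_and_or] at hbad
          rcases hbad with hb | hb
          · push_neg at hb
            right
            refine ⟨?_, hcard⟩
            intro i hi
            match i with
            | Sum.inl a => exact absurd hi (hb a)
            | Sum.inr b => exact Finset.mem_image.mpr ⟨b, Finset.mem_univ _, rfl⟩
          · push_neg at hb
            left
            refine ⟨?_, hcard⟩
            intro i hi
            match i with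
            | Sum.inl a => exact Finset.mem_image.mpr ⟨a, Finset.mem_univ _, rfl⟩
            | Sum.inr b => exact absurd hi (hb b)
        · rintro (⟨hsub, hcard⟩ | ⟨hsub, hcard⟩)
          · refine ⟨hcard, ?_⟩
            rw [not_and_or]
            right
            push_neg
            intro b hb
            obtain ⟨a, _, ha⟩ := Finset.mem_image.mp (hsub hb)
            exact Sum.inl_ne_inr ha
          · refine ⟨hcard, ?_⟩
            rw [not_and_or]
            left
            push_neg
            intro a ha
            obtain ⟨b, _, hb⟩ := Finset.mem_image.mp (hsub ha)
            exact Sum.inr_ne_inl hb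
      rw [hbadeq, Finset.card_union_of_disjoint, Finset.card_powersetCard,
        Finset.card_powersetCard, Finset.card_image_of_injective _ Sum.inl_injective,
        Finset.card_image_of_injective _ Sum.inr_injective, Finset.card_univ,
        Finset.card_univ, Fintype.card_fin, Fintype.card_fin]
      · rw [Finset.disjoint_left]
        intro T hT1 hT2
        rw [Finset.mem_powersetCard] at hT1 hT2
        have hTne : T.Nonempty := by
          rw [← Finset.card_pos, hT1.2]; exact hk0
        obtain ⟨i, hi⟩ := hTne
        obtain ⟨a, _, ha⟩ := Finset.mem_image.mp (hT1.1 hi)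
        obtain ⟨b, _, hb⟩ := Finset.mem_image.mp (hT2.1 hi)
        rw [← ha] at hb
        exact Sum.inr_ne_inl hb
    rw [hbadsplit, htot] at hsplit
    rw [← hbigT] at hsplit
    exact (Nat.eq_sub_of_add_eq hsplit).trans (Nat.sub_sub _ _ _).symm
  rw [hcardΩ, hbigTcard, harith1, mul_assoc]
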